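/- For n odd, the minimum over all proper 3-colorings c of C_n of the maximum size of a critical set for c equals (n+3)/2 if n ≡ 1 (mod 4), and equals (n+1)/2 if n ≡ 3 (mod 4). -/

import Mathlib

open SimpleGraph Finset

/-- A proper `k`-coloring of a simple graph: adjacent vertices get distinct colors. -/
def properColoring {V : Type*} (G : SimpleGraph V) (k : ℕ) (c : V → Fin k) : Prop :=
  ∀ ⦃v w : V⦄, G.Adj v w → c v ≠ c w

/-- `S` is a determining set for `(G, c)`: `c` is the unique proper `k`-coloring
agreeing with `c` on `S`. -/
def Determining {V : Type*} (G : SimpleGraph V) {k : ℕ} (c : V → Fin k) (S : Finset V) : Prop :=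
  ∀ c' : V → Fin k, properColoring G k c' → (∀ v ∈ S, c' v = c v) → c' = c

/-- A critical set: an inclusion-minimal determining set. -/
def CriticalSet {V : Type*} (G : SimpleGraph V) {k : ℕ} (c : V → Fin k) (S : Finset V) : Prop :=
  Determining G c S ∧ ∀ T : Finset V, T ⊂ S → ¬ Determining G c T

/-- The cycle graph on `Fin n`, with `i` adjacent to `i ± 1` (mod `n`). -/
def cycGraph (n : ℕ) [NeZero n] : SimpleGraph (Fin n) :=
  SimpleGraph.fromRel (fun i j => i + 1 = j)

/-- A vertex is colorful if every color appears on its closed neighborhood. -/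
def Colorful {V : Type*} (G : SimpleGraph V) {k : ℕ} (c : V → Fin k) (v : V) : Prop :=
  ∀ a : Fin k, ∃ w : V, (w = v ∨ G.Adj v w) ∧ c w = a

/-- `G` is uniquely `k`-colorable: any two proper `k`-colorings differ by a permutation
of the colors. -/
def UniquelyColorable {V : Type*} (G : SimpleGraph V) (k : ℕ) : Prop :=
  ∀ c c' : V → Fin k, properColoring G k c → properColoring G k c' →
    ∃ π : Equiv.Perm (Fin k), c' = π ∘ c

namespace Stmt10

open Fin.CommRing

variable {n : ℕ} [NeZero n]

lemma natCast_ne_zero {k : ℕ} (h1 : 0 < k) (h2 : k < n) : (k : Fin n) ≠ 0 := by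
  intro h
  rw [Fin.ext_iff] at h
  rw [Fin.val_natCast, Fin.val_zero, Nat.mod_eq_of_lt h2] at h
  omega

lemma add_one_ne (h2 : 2 ≤ n) (v : Fin n) : v ≠ v + 1 := by
  intro h'
  apply natCast_ne_zero (n := n) (k := 1) (by norm_num) (by omega)
  push_cast
  linear_combination -h'

lemma sub_one_ne (h2 : 2 ≤ n) (v : Fin n) : v - 1 ≠ v := by
  intro h'
  apply natCast_ne_zero (n := n) (k := 1) (by norm_num) (by omega)
  push_cast
  linear_combination -h'

lemma sub_one_ne_add_one (h3 : 3 ≤ n) (v : Fin n) : v - 1 ≠ v + 1 := by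
  intro h'
  apply natCast_ne_zero (n := n) (k := 2) (by norm_num) (by omega)
  push_cast
  linear_combination -h'

lemma ne_add_two (h3 : 3 ≤ n) (v : Fin n) : v ≠ v + 2 := by
  intro h'
  apply natCast_ne_zero (n := n) (k := 2) (by norm_num) (by omega)
  push_cast
  linear_combination -h'

lemma add_one_ne_add_two (h2 : 2 ≤ n) (v : Fin n) : v + 1 ≠ v + 2 := by
  intro h'
  apply natCast_ne_zero (n := n) (k := 1) (by norm_num) (by omega)
  push_cast
  linear_combination -h'

lemma sub_one_ne_add_two (h4 : 4 ≤ n) (v : Fin n) : v - 1 ≠ v + 2 := by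
  intro h'
  apply natCast_ne_zero (n := n) (k := 3) (by norm_num) (by omega)
  push_cast
  linear_combination -h'

lemma adj_iff (v w : Fin n) : (cycGraph n).Adj v w ↔ v ≠ w ∧ (v + 1 = w ∨ w + 1 = v) := by
  simp [cycGraph, SimpleGraph.fromRel_adj]

lemma adj_succ (h2 : 2 ≤ n) (v : Fin n) : (cycGraph n).Adj v (v + 1) :=
  (adj_iff v (v+1)).2 ⟨add_one_ne h2 v, Or.inl rfl⟩

lemma proper_iff (h2 : 2 ≤ n) (c : Fin n → Fin 3) :
    properColoring (cycGraph n) 3 c ↔ ∀ v, c v ≠ c (v + 1) := by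
  constructor
  · intro h v
    exact h (adj_succ h2 v)
  · intro h v w hadj
    rw [adj_iff] at hadj
    obtain ⟨hne, h1 | h1⟩ := hadj
    · rw [← h1]; exact h v
    · rw [← h1]; exact (h w).symm

lemma fin3_unique : ∀ a b x y : Fin 3, a ≠ b → x ≠ a → x ≠ b → y ≠ a → y ≠ b → x = y := by decide

lemma fin3_flip : ∀ a b : Fin 3, a ≠ b → (-(a+b) ≠ a ∧ -(a+b) ≠ b) := by decide

lemma fin3_pair : ∀ a b x y : Fin 3, x ≠ a → y ≠ b → x ≠ y →
    ∃ x' : Fin 3, ∃ y' : Fin 3, x' ≠ a ∧ y' ≠ b ∧ x' ≠ y' ∧ (x' ≠ x ∨ y' ≠ y) := by decide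

lemma fin3_add_eq_zero : ∀ a b : Fin 3, a ≠ 0 → b ≠ 0 → (a + b = 0 ↔ a ≠ b) := by decide

/-- flip recoloring at a vertex whose two neighbours share a color -/
lemma flip_recolor (h5 : 5 ≤ n) {c : Fin n → Fin 3} (hc : properColoring (cycGraph n) 3 c)
    (v : Fin n) (hv : c (v - 1) = c (v + 1)) :
    ∃ c', properColoring (cycGraph n) 3 c' ∧ c' ≠ c ∧ ∀ w, w ≠ v → c' w = c w := by
  have h2 : 2 ≤ n := by omega
  have ha : c (v - 1) ≠ c v := by
    have hadj : (cycGraph n).Adj (v - 1) v :=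
      (adj_iff _ _).2 ⟨sub_one_ne h2 v, Or.inl (by ring)⟩
    exact hc hadj
  obtain ⟨hx1, hx2⟩ := fin3_flip (c (v-1)) (c v) ha
  set x : Fin 3 := -(c (v-1) + c v) with hxdef
  refine ⟨Function.update c v x, ?_, ?_, ?_⟩
  · rw [proper_iff h2]
    intro w
    by_cases hw : w = v
    · subst hw
      rw [Function.update_self, Function.update_of_ne (add_one_ne h2 w).symm]
      rw [← hv]; exact hx1
    · by_cases hw1 : w = v - 1
      · subst hw1
        have h' : (v - 1) + 1 = v := by ring
        rw [Function.update_of_ne hw, h', Function.update_self]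
        intro hh; exact hx1 (by rw [← hh])
      · have hw1' : w + 1 ≠ v := by
          intro hh; exact hw1 (by rw [← hh]; ring)
        rw [Function.update_of_ne hw, Function.update_of_ne hw1']
        exact hc (adj_succ h2 w)
  · intro hh
    have := congrFun hh v
    rw [Function.update_self] at this
    exact hx2 (by rw [this])
  · intro w hw
    exact Function.update_of_ne hw _ _

/-- pair recoloring at an edge -/
lemma pair_recolor (h5 : 5 ≤ n) {c : Fin n → Fin 3} (hc : properColoring (cycGraph n) 3 c)
    (v : Fin n) :
    ∃ c', properColoring (cycGraph n) 3 c' ∧ c' ≠ c ∧ ∀ w, w ≠ v → w ≠ v + 1 → c' w = c w := by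
  have h2 : 2 ≤ n := by omega
  have hx : c v ≠ c (v - 1) := by
    have hadj : (cycGraph n).Adj (v - 1) v :=
      (adj_iff _ _).2 ⟨sub_one_ne h2 v, Or.inl (by ring)⟩
    exact (hc hadj).symm
  have hy : c (v + 1) ≠ c (v + 2) := by
    have := hc (adj_succ h2 (v + 1))
    have h' : v + 1 + 1 = v + 2 := by ring
    rwa [h'] at this
  have hxy : c v ≠ c (v + 1) := hc (adj_succ h2 v)
  obtain ⟨x', y', ha, hb, hab, hne⟩ := fin3_pair (c (v-1)) (c (v+2)) (c v) (c (v+1)) hx hy hxy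
  set c' : Fin n → Fin 3 := Function.update (Function.update c v x') (v + 1) y' with hc'def
  have ev : c' v = x' := by
    rw [hc'def, Function.update_of_ne (add_one_ne h2 v), Function.update_self]
  have ev1 : c' (v + 1) = y' := by rw [hc'def, Function.update_self]
  have evo : ∀ w, w ≠ v → w ≠ v + 1 → c' w = c w := by
    intro w hw hw1
    rw [hc'def, Function.update_of_ne hw1, Function.update_of_ne hw]
  refine ⟨c', ?_, ?_, evo⟩
  · rw [proper_iff h2]
    intro w
    by_cases hwv : w = v
    · subst hwv; rw [ev, ev1]; exact hab
    · by_cases hwv1 : w = v + 1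
      · subst hwv1
        rw [ev1, evo (v + 1 + 1) (by rw [show v+1+1 = v+2 by ring]; exact (ne_add_two (by omega) v).symm) (add_one_ne h2 (v+1)).symm]
        rw [show v+1+1 = v+2 by ring]
        exact hb
      · by_cases hwm : w = v - 1
        · subst hwm
          rw [evo _ (sub_one_ne h2 v) (sub_one_ne_add_one (by omega) v), show v - 1 + 1 = v by ring, ev]
          intro hh; exact ha hh.symm
        · have h1 : w + 1 ≠ v := by intro hh; exact hwm (by rw [← hh]; ring)
          have h2' : w + 1 ≠ v + 1 := by intro hh; exact hwv (by
            have := add_right_cancel hh; exact this)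
          rw [evo w hwv hwv1, evo _ h1 h2']
          exact hc (adj_succ h2 w)
  · intro hh
    rcases hne with h | h
    · exact h (by rw [← hh, ev])
    · exact h (by rw [← hh, ev1])

def validT (c : Fin n → Fin 3) (T : Finset (Fin n)) : Prop :=
  (∀ v : Fin n, v ∈ T → v + 1 ∉ T) ∧
  (∀ v ∈ T, c (v - 1) ≠ c (v + 1)) ∧
  (∀ v : Fin n, c (v - 1) ≠ c (v + 1) → v ∈ T ∨ v - 1 ∈ T ∨ v + 1 ∈ T)

lemma crit_iff (h5 : 5 ≤ n) {c : Fin n → Fin 3} (hc : properColoring (cycGraph n) 3 c)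
    (S : Finset (Fin n)) : CriticalSet (cycGraph n) c S ↔ validT c Sᶜ := by
  have h2 : 2 ≤ n := by omega
  have hprop : ∀ (c' : Fin n → Fin 3), properColoring (cycGraph n) 3 c' →
      ∀ v : Fin n, c' (v - 1) ≠ c' v ∧ c' v ≠ c' (v + 1) := by
    intro c' hc' v
    constructor
    · have := (proper_iff h2 c').1 hc' (v - 1)
      rwa [show v - 1 + 1 = v by ring] at this
    · exact (proper_iff h2 c').1 hc' v
  constructor
  · rintro ⟨hdet, hmin⟩
    refine ⟨?_, ?_, ?_⟩
    · intro v hv hv1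
      rw [Finset.mem_compl] at hv hv1
      obtain ⟨c', hp, hne, hag⟩ := pair_recolor h5 hc v
      exact hne (hdet c' hp (fun w hw => hag w (fun h => hv (h ▸ hw)) (fun h => hv1 (h ▸ hw))))
    · intro v hv
      rw [Finset.mem_compl] at hv
      intro hflip
      obtain ⟨c', hp, hne, hag⟩ := flip_recolor h5 hc v hflip
      exact hne (hdet c' hp (fun w hw => hag w (fun h => hv (h ▸ hw))))
    · intro v hnf
      by_contra hcon
      push_neg at hcon
      obtain ⟨h1, h2', h3⟩ := hcon
      rw [Finset.mem_compl, not_not] at h1 h2' h3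
      apply hmin (S.erase v) (Finset.erase_ssubset h1)
      intro c' hp hag
      have hagS : ∀ w ∈ S, c' w = c w := by
        intro w hw
        by_cases hwv : w = v
        · subst hwv
          have e1 : c' (w - 1) = c (w - 1) := hag _ (Finset.mem_erase.2 ⟨sub_one_ne h2 w, h2'⟩)
          have e2 : c' (w + 1) = c (w + 1) := hag _ (Finset.mem_erase.2 ⟨(add_one_ne h2 w).symm, h3⟩)
          have p1 := (hprop c' hp w).1
          have p2 := (hprop c' hp w).2
          have q1 := (hprop c hc w).1
          have q2 := (hprop c hc w).2
          rw [e1] at p1; rw [e2] at p2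
          exact fin3_unique (c (w-1)) (c (w+1)) (c' w) (c w) hnf (Ne.symm p1) p2 (Ne.symm q1) q2
        · exact hag w (Finset.mem_erase.2 ⟨hwv, hw⟩)
      exact hdet c' hp hagS
  · rintro ⟨h1, h2', h3⟩
    have hdet : Determining (cycGraph n) c S := by
      intro c' hp hag
      funext v
      by_cases hv : v ∈ S
      · exact hag v hv
      · have hvT : v ∈ Sᶜ := Finset.mem_compl.2 hv
        have hv1 : v + 1 ∈ S := by
          by_contra hh
          exact (h1 v hvT) (Finset.mem_compl.2 hh)
        have hvm : v - 1 ∈ S := by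
          by_contra hh
          have := h1 (v - 1) (Finset.mem_compl.2 hh)
          rw [show v - 1 + 1 = v by ring] at this
          exact this hvT
        have e1 : c' (v - 1) = c (v - 1) := hag _ hvm
        have e2 : c' (v + 1) = c (v + 1) := hag _ hv1
        have p1 := (hprop c' hp v).1
        have p2 := (hprop c' hp v).2
        have q1 := (hprop c hc v).1
        have q2 := (hprop c hc v).2
        rw [e1] at p1; rw [e2] at p2
        exact fin3_unique (c (v-1)) (c (v+1)) (c' v) (c v) (h2' v hvT) (Ne.symm p1) p2 (Ne.symm q1) q2
    refine ⟨hdet, ?_⟩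
    intro T' hT' hdet'
    obtain ⟨v, hvS, hvT'⟩ := Finset.exists_of_ssubset hT'
    by_cases hflip : c (v - 1) = c (v + 1)
    · obtain ⟨c', hp, hne, hag⟩ := flip_recolor h5 hc v hflip
      exact hne (hdet' c' hp (fun w hw => hag w (fun h => hvT' (h ▸ hw))))
    · rcases h3 v hflip with hh | hh | hh
      · exact absurd hvS (Finset.mem_compl.1 hh)
      · obtain ⟨c', hp, hne, hag⟩ := pair_recolor h5 hc (v - 1)
        apply hne
        apply hdet' c' hp
        intro w hw
        apply hag w
        · intro he
          exact (Finset.mem_compl.1 hh) (he ▸ (hT'.subset hw))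
        · rw [show v - 1 + 1 = v by ring]
          intro he
          exact hvT' (he ▸ hw)
      · obtain ⟨c', hp, hne, hag⟩ := pair_recolor h5 hc v
        apply hne
        apply hdet' c' hp
        intro w hw
        apply hag w
        · intro he
          exact hvT' (he ▸ hw)
        · intro he
          exact (Finset.mem_compl.1 hh) (he ▸ (hT'.subset hw))


section Greedy
variable (c : Fin n → Fin 3)

def Flip (v : Fin n) : Prop := c (v - 1) = c (v + 1)

instance : DecidablePred (Flip c) := fun v => by unfold Flip; infer_instance

def dd (v : Fin n) : Fin 3 := c (v + 1) - c v

variable {c}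

lemma fin3_neg : ∀ a b : Fin 3, a ≠ 0 → b ≠ 0 → a ≠ b → b = -a := by decide
lemma fin3_dbl : ∀ a : Fin 3, a + a = -a := by decide
lemma fin3_negne : ∀ a : Fin 3, a ≠ 0 → -a ≠ a := by decide
lemma fin3_add_eq_zero' : ∀ a b : Fin 3, a ≠ 0 → b ≠ 0 → (a + b = 0 ↔ a ≠ b) := by decide

lemma dd_ne_zero (hd : ∀ v : Fin n, c v ≠ c (v + 1)) (v : Fin n) : dd c v ≠ 0 :=
  sub_ne_zero.2 (Ne.symm (hd v))

lemma flip_iff (hd : ∀ v : Fin n, c v ≠ c (v + 1)) (v : Fin n) :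
    Flip c v ↔ dd c (v - 1) ≠ dd c v := by
  have h1 : dd c (v - 1) + dd c v = c (v + 1) - c (v - 1) := by
    unfold dd
    rw [show v - 1 + 1 = v by ring]
    ring
  have h2 : Flip c v ↔ dd c (v - 1) + dd c v = 0 := by
    unfold Flip
    rw [h1]
    constructor
    · intro h; rw [h]; ring
    · intro h; have := sub_eq_zero.1 h; exact this.symm
  rw [h2]
  exact fin3_add_eq_zero' _ _ (dd_ne_zero hd (v - 1)) (dd_ne_zero hd v)

lemma not_flip_iff (hd : ∀ v : Fin n, c v ≠ c (v + 1)) (v : Fin n) :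
    ¬ Flip c v ↔ dd c (v - 1) = dd c v := by
  rw [flip_iff hd v]; tauto

lemma exists_prevF (hF : ∃ w, Flip c w) (v : Fin n) : ∃ k : ℕ, Flip c (v - ↑(k + 1)) := by
  obtain ⟨w, hw⟩ := hF
  by_cases hvw : v = w
  · refine ⟨n - 1, ?_⟩
    have h1 : ((n - 1 + 1 : ℕ) : Fin n) = 0 := by
      rw [show n - 1 + 1 = n by omega]; exact Fin.natCast_self n
    rw [h1, sub_zero, hvw]
    exact hw
  · refine ⟨(v - w).val - 1, ?_⟩
    have h0 : (v - w) ≠ 0 := sub_ne_zero.2 hvw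
    have h1 : (v - w).val ≠ 0 := by
      intro h; exact h0 (Fin.ext (by simp [h]))
    have h2 : ((v - w).val - 1 + 1) = (v - w).val := by omega
    rw [h2, Fin.cast_val_eq_self]
    rw [show v - (v - w) = w by ring]
    exact hw

def rho (hF : ∃ w, Flip c w) (v : Fin n) : ℕ := Nat.find (exists_prevF hF v)

lemma rho_succ_mem (hF : ∃ w, Flip c w) (v : Fin n) (h : Flip c v) : rho hF (v + 1) = 0 := by
  rw [rho, Nat.find_eq_zero]
  show Flip c (v + 1 - (((0:ℕ) + 1 : ℕ) : Fin n))
  rw [show (((0:ℕ) + 1 : ℕ) : Fin n) = 1 by norm_num, show v + 1 - 1 = v by ring]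
  exact h

lemma rho_succ_not_mem (hF : ∃ w, Flip c w) (v : Fin n) (h : ¬ Flip c v) :
    rho hF (v + 1) = rho hF v + 1 := by
  rw [rho, Nat.find_eq_iff]
  constructor
  · have := Nat.find_spec (exists_prevF hF v)
    show Flip c (v + 1 - ↑(rho hF v + 1 + 1))
    have harith : v + 1 - ↑(rho hF v + 1 + 1) = v - ↑(rho hF v + 1) := by
      push_cast; ring
    rw [harith]
    exact this
  · intro j hj
    match j with
    | 0 => simpa using h
    | (i + 1) =>
      have hi : i < rho hF v := by omega
      have := Nat.find_min (exists_prevF hF v) hi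
      intro hcon
      apply this
      have harith : v + 1 - ↑(i + 1 + 1) = v - ↑(i + 1) := by push_cast; ring
      rwa [harith] at hcon

lemma rho_pred (hF : ∃ w, Flip c w) (v : Fin n) (h : ¬ Flip c (v - 1)) :
    rho hF v = rho hF (v - 1) + 1 := by
  have := rho_succ_not_mem hF (v - 1) h
  rwa [show v - 1 + 1 = v by ring] at this

lemma not_flip_pred_of_rho_pos (hF : ∃ w, Flip c w) (v : Fin n) (h : 0 < rho hF v) :
    ¬ Flip c (v - 1) := by
  intro hcon
  have := Nat.find_min (exists_prevF hF v) (m := 0) h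
  apply this
  show Flip c (v - (((0:ℕ) + 1 : ℕ) : Fin n))
  rw [show (((0:ℕ) + 1 : ℕ) : Fin n) = 1 by norm_num]
  exact hcon

def gT (hF : ∃ w, Flip c w) : Finset (Fin n) :=
  univ.filter (fun v => ¬ Flip c v ∧ (rho hF v % 3 = 1 ∨ (Flip c (v + 1) ∧ rho hF v % 3 = 0)))

lemma mem_gT (hF : ∃ w, Flip c w) (v : Fin n) :
    v ∈ gT hF ↔ ¬ Flip c v ∧ (rho hF v % 3 = 1 ∨ (Flip c (v + 1) ∧ rho hF v % 3 = 0)) := by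
  simp [gT]

lemma gT_indep (hF : ∃ w, Flip c w) : ∀ v : Fin n, v ∈ gT hF → v + 1 ∉ gT hF := by
  intro v hv hv1
  rw [mem_gT] at hv hv1
  obtain ⟨hnf, hrule⟩ := hv
  obtain ⟨hnf1, hrule1⟩ := hv1
  rcases hrule with h | ⟨hf, _⟩
  · have : rho hF (v + 1) = rho hF v + 1 := rho_succ_not_mem hF v hnf
    rcases hrule1 with h1 | ⟨_, h1⟩ <;> omega
  · exact hnf1 hf

lemma gT_dom (hF : ∃ w, Flip c w) :
    ∀ v : Fin n, ¬ Flip c v → v ∈ gT hF ∨ v - 1 ∈ gT hF ∨ v + 1 ∈ gT hF := by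
  intro v hnf
  have h3 : rho hF v % 3 = 0 ∨ rho hF v % 3 = 1 ∨ rho hF v % 3 = 2 := by omega
  rcases h3 with h | h | h
  · by_cases hf1 : Flip c (v + 1)
    · exact Or.inl ((mem_gT hF v).2 ⟨hnf, Or.inr ⟨hf1, h⟩⟩)
    · refine Or.inr (Or.inr ((mem_gT hF (v+1)).2 ⟨hf1, Or.inl ?_⟩))
      rw [rho_succ_not_mem hF v hnf]
      omega
  · exact Or.inl ((mem_gT hF v).2 ⟨hnf, Or.inl h⟩)
  · have hpos : 0 < rho hF v := by omega
    have hnfp : ¬ Flip c (v - 1) := not_flip_pred_of_rho_pos hF v hpos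
    refine Or.inr (Or.inl ((mem_gT hF (v-1)).2 ⟨hnfp, Or.inl ?_⟩))
    have := rho_pred hF v hnfp
    omega

lemma natCast_ne_zero' {k : ℕ} (h1 : 0 < k) (h2 : k < n) : (k : Fin n) ≠ 0 := by
  intro h
  rw [Fin.ext_iff] at h
  rw [Fin.val_natCast, Fin.val_zero, Nat.mod_eq_of_lt h2] at h
  omega

lemma indep_union_card (T : Finset (Fin n)) (hind : ∀ v ∈ T, v + 1 ∉ T) :
    (T ∪ T.image (· - 1)).card = 2 * T.card := by
  have hinj : Function.Injective (fun a : Fin n => a - 1) := by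
    intro a b h
    have h2 := congrArg (fun x : Fin n => x + 1) h
    simpa [sub_add_cancel] using h2
  have hdisj : Disjoint T (T.image (· - 1)) := by
    rw [Finset.disjoint_left]
    intro x hx hximg
    obtain ⟨t, ht, hteq⟩ := Finset.mem_image.1 hximg
    apply hind x hx
    rw [show x + 1 = t from by rw [← hteq]; ring]
    exact ht
  rw [Finset.card_union_of_disjoint hdisj, Finset.card_image_of_injective _ hinj]
  omega

lemma two_mul_card_le_n (T : Finset (Fin n)) (hind : ∀ v ∈ T, v + 1 ∉ T) :
    2 * T.card ≤ n := by
  have h := indep_union_card T hind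
  have h2 : (T ∪ T.image (· - 1)).card ≤ n := by
    have := Finset.card_le_univ (T ∪ T.image (· - 1))
    simpa using this
  omega

lemma sum_dd_zero (c : Fin n → Fin 3) : ∑ v : Fin n, dd c v = 0 := by
  unfold dd
  rw [Finset.sum_sub_distrib]
  rw [show ∑ v : Fin n, c (v + 1) = ∑ v : Fin n, c v from
    Fintype.sum_equiv (Equiv.addRight (1 : Fin n)) _ c (fun v => rfl)]
  ring

lemma sum_shift (g : Fin n → Fin 3) (a : Fin n) :
    ∑ i ∈ Finset.range n, g (a + (i : Fin n)) = ∑ v : Fin n, g v := by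
  have hinjOn : ∀ i ∈ Finset.range n, ∀ j ∈ Finset.range n,
      a + (i : Fin n) = a + (j : Fin n) → i = j := by
    intro i hi j hj hij
    rw [Finset.mem_range] at hi hj
    have h1 : ((i : Fin n)) = (j : Fin n) := by
      have := congrArg (fun x => x - a) hij
      simpa [add_comm, add_sub_cancel_right] using this
    rw [Fin.ext_iff, Fin.val_natCast, Fin.val_natCast, Nat.mod_eq_of_lt hi,
      Nat.mod_eq_of_lt hj] at h1
    exact h1
  have himg : (Finset.range n).image (fun i : ℕ => a + (i : Fin n)) = Finset.univ := by
    apply Finset.eq_univ_of_card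
    rw [Finset.card_image_of_injOn hinjOn, Finset.card_range, Fintype.card_fin]
  calc ∑ i ∈ Finset.range n, g (a + (i : Fin n))
      = ∑ x ∈ (Finset.range n).image (fun i : ℕ => a + (i : Fin n)), g x :=
        (Finset.sum_image hinjOn).symm
    _ = ∑ v : Fin n, g v := by rw [himg]

lemma gT_hard (h5 : 5 ≤ n) (hodd : n % 2 = 1) (hn4 : n % 4 = 1)
    {c : Fin n → Fin 3} (hd : ∀ v : Fin n, c v ≠ c (v + 1)) (hF : ∃ w, Flip c w)
    (hcard : 2 * (gT hF).card = n - 1) : False := by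
  have hind := gT_indep hF
  have hcompl : ((gT hF) ∪ (gT hF).image (· - 1))ᶜ.card = 1 := by
    rw [Finset.card_compl, indep_union_card _ hind]
    simp only [Fintype.card_fin]
    omega
  obtain ⟨u, hu⟩ := Finset.card_eq_one.1 hcompl
  have humem := Finset.mem_compl.1 (hu ▸ Finset.mem_singleton_self u)
  have hcov : ∀ v : Fin n, v ≠ u → v ∈ gT hF ∨ v + 1 ∈ gT hF := by
    intro v hv
    have h1 : v ∉ ((gT hF) ∪ (gT hF).image (· - 1))ᶜ := by
      rw [hu, Finset.mem_singleton]; exact hv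
    rw [Finset.mem_compl, not_not] at h1
    rcases Finset.mem_union.1 h1 with h | h
    · exact Or.inl h
    · obtain ⟨t, ht, hteq⟩ := Finset.mem_image.1 h
      right
      rw [show v + 1 = t from by rw [← hteq]; ring]
      exact ht
  have hu1 : u ∉ gT hF := fun hcon => humem (Finset.mem_union.2 (Or.inl hcon))
  have hu2 : u + 1 ∉ gT hF := by
    intro hcon
    exact humem (Finset.mem_union.2 (Or.inr (Finset.mem_image.2 ⟨u + 1, hcon, by ring⟩)))
  have chi : ∀ j : ℕ, 1 ≤ j → j ≤ n - 1 → ((u + (j : Fin n)) ∈ gT hF ↔ j % 2 = 0) := by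
    intro j
    induction j with
    | zero => intro h; exact absurd h (by omega)
    | succ k ih =>
      intro _ hj
      by_cases hk : k = 0
      · subst hk
        have hcast1 : u + ((0 + 1 : ℕ) : Fin n) = u + 1 := by push_cast; ring
        rw [hcast1]
        constructor
        · intro hcon; exact absurd hcon hu2
        · intro h1; omega
      · have ihk := ih (by omega) (by omega)
        have hne : u + (k : Fin n) ≠ u := by
          intro hcon
          apply natCast_ne_zero' (n := n) (k := k) (by omega) (by omega)
          have : u + (k : Fin n) = u + 0 := by rw [hcon, add_zero]
          exact add_left_cancel this
        have hcast : u + ((k + 1 : ℕ) : Fin n) = (u + (k : Fin n)) + 1 := by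
          push_cast; ring
        by_cases hp : k % 2 = 0
        · have hmem : u + (k : Fin n) ∈ gT hF := ihk.2 hp
          have : u + ((k + 1 : ℕ) : Fin n) ∉ gT hF := by
            rw [hcast]; exact hind _ hmem
          simp only [this, false_iff]
          omega
        · have hmem : u + (k : Fin n) ∉ gT hF := fun hcon => by
            have := ihk.1 hcon; omega
          have : u + ((k + 1 : ℕ) : Fin n) ∈ gT hF := by
            rw [hcast]
            rcases hcov _ hne with h | h
            · exact absurd h hmem
            · exact h
          simp only [this, true_iff]
          omega
  set J := (n - 1) / 2 with hJdef
  have hJ2 : 2 ≤ J := by omega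
  have hJeven : J % 2 = 0 := by omega
  set f : ℕ → Fin 3 := fun i => dd c (u + 1 + (i : Fin n)) with hfdef
  have hF1 : ∀ j : ℕ, j < J → f (2 * j) = f (2 * j + 1) := by
    intro j hj
    have hmem : u + ((2 * j + 2 : ℕ) : Fin n) ∈ gT hF :=
      (chi (2 * j + 2) (by omega) (by omega)).2 (by omega)
    have hnf := ((mem_gT hF _).1 hmem).1
    have hkey := (not_flip_iff hd _).1 hnf
    have e1 : u + ((2 * j + 2 : ℕ) : Fin n) - 1 = u + 1 + ((2 * j : ℕ) : Fin n) := by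
      push_cast; ring
    have e2 : u + ((2 * j + 2 : ℕ) : Fin n) = u + 1 + ((2 * j + 1 : ℕ) : Fin n) := by
      push_cast; ring
    rw [e1, e2] at hkey
    exact hkey
  have hF2 : ∀ j : ℕ, 1 ≤ j → j < J → f (2 * (j + 1)) = - f (2 * j) := by
    intro j h1 hj
    have hmem : u + ((2 * j : ℕ) : Fin n) ∈ gT hF :=
      (chi (2 * j) (by omega) (by omega)).2 (by omega)
    have hmem2 : u + ((2 * j + 2 : ℕ) : Fin n) ∈ gT hF :=
      (chi (2 * j + 2) (by omega) (by omega)).2 (by omega)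
    set t : Fin n := u + ((2 * j : ℕ) : Fin n) with htdef
    have et2 : u + ((2 * j + 2 : ℕ) : Fin n) = t + 1 + 1 := by
      rw [htdef]; push_cast; ring
    rw [et2] at hmem2
    obtain ⟨hnft, hrt⟩ := (mem_gT hF _).1 hmem
    obtain ⟨hnft2, hrt2⟩ := (mem_gT hF _).1 hmem2
    have hflip3 : Flip c (t + 1 + 1 + 1) := by
      by_cases hf1 : Flip c (t + 1)
      · have hr0 : rho hF (t + 1 + 1) = 0 := rho_succ_mem hF _ hf1
        rcases hrt2 with h | ⟨hfl, _⟩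
        · omega
        · exact hfl
      · have hrt1 : rho hF t % 3 = 1 := by
          rcases hrt with h | ⟨hfl, _⟩
          · exact h
          · exact absurd hfl hf1
        have e3 : rho hF (t + 1) = rho hF t + 1 := rho_succ_not_mem hF t hnft
        have e4 : rho hF (t + 1 + 1) = rho hF (t + 1) + 1 := rho_succ_not_mem hF (t + 1) hf1
        rcases hrt2 with h | ⟨hfl, _⟩
        · omega
        · exact hfl
    have hdne : dd c (t + 1 + 1) ≠ dd c (t + 1 + 1 + 1) := by
      have hh := (flip_iff hd (t + 1 + 1 + 1)).1 hflip3
      rwa [show t + 1 + 1 + 1 - 1 = t + 1 + 1 by ring] at hh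
    have e5 : t + 1 + 1 = u + 1 + ((2 * j + 1 : ℕ) : Fin n) := by rw [htdef]; push_cast; ring
    have e6 : t + 1 + 1 + 1 = u + 1 + ((2 * (j + 1) : ℕ) : Fin n) := by rw [htdef]; push_cast; ring
    rw [e6, e5] at hdne
    have hdne' : f (2 * j) ≠ f (2 * (j + 1)) := by
      rw [hF1 j hj]
      exact hdne
    exact fin3_neg _ _ (dd_ne_zero hd _) (dd_ne_zero hd _) hdne'
  have hyval : ∀ m : ℕ, 1 ≤ m → m ≤ J → f (2 * m) = (if m % 2 = 1 then f 2 else - f 2) := by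
    intro m
    induction m with
    | zero => intro h; exact absurd h (by omega)
    | succ k ih =>
      intro _ h2
      by_cases hk : k = 0
      · subst hk; norm_num
      · have e := hF2 k (by omega) (by omega)
        have ihk := ih (by omega) (by omega)
        rw [e, ihk]
        by_cases hp : k % 2 = 1
        · rw [if_pos hp, if_neg (by omega : ¬ (k + 1) % 2 = 1)]
        · rw [if_neg hp, if_pos (by omega : (k + 1) % 2 = 1), neg_neg]
  have hpair : ∀ m : ℕ, m ≤ J → ∑ i ∈ Finset.range (2 * m), f i =
      (if m = 0 then 0 else - f 0 - (if m % 2 = 0 then f 2 else 0)) := by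
    intro m
    induction m with
    | zero => simp
    | succ k ih =>
      intro hk
      have ihk := ih (by omega)
      rw [show 2 * (k + 1) = (2 * k + 1) + 1 by ring, Finset.sum_range_succ,
        Finset.sum_range_succ, ihk]
      have hpairval : f (2 * k + 1) = f (2 * k) := (hF1 k (by omega)).symm
      rw [hpairval]
      by_cases hk0 : k = 0
      · subst hk0
        rw [if_pos rfl, if_neg (by omega : ¬ (0:ℕ) + 1 = 0),
          if_neg (by omega : ¬ ((0:ℕ) + 1) % 2 = 0)]
        have h00 : f (2 * 0) = f 0 := by norm_num
        rw [h00]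
        linear_combination fin3_dbl (f 0)
      · have hyk := hyval k (by omega) (by omega)
        rw [if_neg hk0, if_neg (by omega : ¬ k + 1 = 0)]
        by_cases hp : k % 2 = 1
        · rw [if_pos hp] at hyk
          rw [if_neg (by omega : ¬ k % 2 = 0), if_pos (by omega : (k + 1) % 2 = 0), hyk]
          linear_combination fin3_dbl (f 2)
        · rw [if_neg hp] at hyk
          rw [if_pos (by omega : k % 2 = 0), if_neg (by omega : ¬ (k + 1) % 2 = 0), hyk]
          linear_combination - fin3_dbl (f 2)
  -- total sum
  have htot : ∑ i ∈ Finset.range n, f i = 0 := by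
    rw [show (∑ i ∈ Finset.range n, f i) = ∑ i ∈ Finset.range n, dd c (u + 1 + (i : Fin n)) from rfl]
    rw [sum_shift (dd c) (u + 1)]
    exact sum_dd_zero c
  have hsplit : ∑ i ∈ Finset.range n, f i = (∑ i ∈ Finset.range (2 * J), f i) + f (2 * J) := by
    rw [show n = 2 * J + 1 by omega, Finset.sum_range_succ]
  have hJne : J ≠ 0 := by omega
  have hsum2J : ∑ i ∈ Finset.range (2 * J), f i = - f 0 - f 2 := by
    rw [hpair J le_rfl, if_neg hJne, if_pos hJeven]
  have hfJ : f (2 * J) = - f 2 := by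
    rw [hyval J (by omega) le_rfl, if_neg (by omega : ¬ J % 2 = 1)]
  have h02 : f 0 = f 2 := by
    have hz : - f 0 - f 2 + - f 2 = 0 := by
      rw [← hsum2J, ← hfJ, ← hsplit]; exact htot
    have hd3 : ∀ a b : Fin 3, - a - b + - b = 0 → a = b := by decide
    exact hd3 _ _ hz
  have hff : ∀ i : ℕ, f i ≠ 0 := fun i => dd_ne_zero hd _
  have hflipu1 : Flip c (u + 1) := by
    rw [flip_iff hd]
    rw [show u + 1 - 1 = u by ring]
    have e8 : (u : Fin n) = u + 1 + ((2 * J : ℕ) : Fin n) := by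
      have hz : ((2 * J : ℕ) : Fin n) + 1 = 0 := by
        rw [show (1 : Fin n) = ((1 : ℕ) : Fin n) by norm_num, ← Nat.cast_add,
          show 2 * J + 1 = n by omega]
        exact Fin.natCast_self n
      calc (u : Fin n) = u + (((2 * J : ℕ) : Fin n) + 1) := by rw [hz, add_zero]
        _ = u + 1 + ((2 * J : ℕ) : Fin n) := by ring
    nth_rewrite 1 [e8]
    show f (2 * J) ≠ dd c (u + 1)
    have e9 : dd c (u + 1) = f 0 := by
      show dd c (u + 1) = dd c (u + 1 + ((0 : ℕ) : Fin n))
      norm_num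
    rw [e9, hfJ, h02]
    exact fin3_negne _ (hff 2)
  have hrho0 : rho hF (u + 1 + 1) = 0 := rho_succ_mem hF _ hflipu1
  have hmem2 : u + ((2 : ℕ) : Fin n) ∈ gT hF := (chi 2 (by omega) (by omega)).2 (by norm_num)
  rw [show u + ((2 : ℕ) : Fin n) = u + 1 + 1 by push_cast; ring] at hmem2
  obtain ⟨hnf2, hr2⟩ := (mem_gT hF _).1 hmem2
  have hflip3' : Flip c (u + 1 + 1 + 1) := by
    rcases hr2 with h | ⟨hfl, _⟩
    · omega
    · exact hfl
  have hlast := (flip_iff hd _).1 hflip3'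
  rw [show u + 1 + 1 + 1 - 1 = u + 1 + 1 by ring] at hlast
  rw [show u + 1 + 1 = u + 1 + ((1 : ℕ) : Fin n) by push_cast; ring,
      show u + 1 + ((1 : ℕ) : Fin n) + 1 = u + 1 + ((2 : ℕ) : Fin n) by push_cast; ring] at hlast
  apply hlast
  show f 1 = f 2
  rw [← h02]
  have hf01 := hF1 0 (by omega)
  norm_num at hf01
  exact hf01.symm

lemma gT_card_bound (h5 : 5 ≤ n) (hodd : n % 2 = 1)
    {c : Fin n → Fin 3} (hd : ∀ v : Fin n, c v ≠ c (v + 1)) (hF : ∃ w, Flip c w) :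
    2 * (gT hF).card ≤ n - 1 ∧ (n % 4 = 1 → (gT hF).card ≤ (n - 3) / 2) := by
  have h1 := two_mul_card_le_n _ (gT_indep hF)
  constructor
  · omega
  · intro h4
    by_contra hcon
    exact gT_hard h5 hodd h4 hd hF (by omega)

lemma val_add_one' (h2 : 2 ≤ n) (v : Fin n) :
    (v + 1).val = if v.val + 1 = n then 0 else v.val + 1 := by
  have hv := v.isLt
  have h1 : (1 : Fin n).val = 1 := by
    have hh := Fin.val_one' n
    rwa [Nat.mod_eq_of_lt (by omega)] at hh
  rw [Fin.val_add, h1]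
  by_cases hc : v.val + 1 = n
  · rw [if_pos hc, hc, Nat.mod_self]
  · rw [if_neg hc, Nat.mod_eq_of_lt (by omega)]

lemma val_sub_one' (h2 : 2 ≤ n) (v : Fin n) :
    (v - 1).val = if v.val = 0 then n - 1 else v.val - 1 := by
  have hv := v.isLt
  have h1 : (1 : Fin n).val = 1 := by
    have hh := Fin.val_one' n
    rwa [Nat.mod_eq_of_lt (by omega)] at hh
  have hs : (v - 1).val = (n - (1:Fin n).val + v.val) % n := by rw [Fin.sub_def]
  rw [hs, h1]
  by_cases hc : v.val = 0
  · rw [if_pos hc, hc, Nat.add_zero, Nat.mod_eq_of_lt (by omega)]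
  · rw [if_neg hc, show n - 1 + v.val = n + (v.val - 1) by omega, Nat.add_mod_left,
      Nat.mod_eq_of_lt (by omega)]

lemma nsmul_fin3 : ∀ a : Fin 3, a ≠ 0 → ∀ m : ℕ, m • a = 0 → m % 3 = 0 := by
  have h3 : ∀ b : Fin 3, (3 : ℕ) • b = 0 := by decide
  have h12 : ∀ b : Fin 3, b ≠ 0 → ¬ ((1 : ℕ) • b = 0) ∧ ¬ ((2 : ℕ) • b = 0) := by decide
  intro a ha m hm
  have hsplit2 : m • a = (m / 3 * 3 + m % 3) • a :=
    congrArg (fun k : ℕ => k • a) (by omega)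
  rw [hsplit2, add_smul, mul_smul, h3 a, smul_zero, zero_add] at hm
  rcases (by omega : m % 3 = 0 ∨ m % 3 = 1 ∨ m % 3 = 2) with h | h | h
  · exact h
  · rw [h] at hm; exact absurd hm (h12 a ha).1
  · rw [h] at hm; exact absurd hm (h12 a ha).2

lemma noflip_case (h5 : 5 ≤ n) {c : Fin n → Fin 3} (hd : ∀ v : Fin n, c v ≠ c (v + 1))
    (hnf : ∀ v : Fin n, ¬ Flip c v) :
    ∃ T : Finset (Fin n), (∀ v ∈ T, v + 1 ∉ T) ∧ (∀ v ∈ T, ¬ Flip c v) ∧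
      (∀ v : Fin n, ¬ Flip c v → v ∈ T ∨ v - 1 ∈ T ∨ v + 1 ∈ T) ∧
      T.card = n / 3 ∧ n % 3 = 0 := by
  have h2 : 2 ≤ n := by omega
  -- constant difference
  have hdc : ∀ v : Fin n, dd c v = dd c (v + 1) := by
    intro v
    have := (not_flip_iff hd (v + 1)).1 (hnf (v + 1))
    rwa [show v + 1 - 1 = v by ring] at this
  have hconstk : ∀ k : ℕ, dd c ((k : ℕ) : Fin n) = dd c 0 := by
    intro k
    induction k with
    | zero => norm_num
    | succ j ih =>
      rw [show ((j + 1 : ℕ) : Fin n) = ((j : ℕ) : Fin n) + 1 by push_cast; ring, ← hdc, ih]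
  have hconst : ∀ v : Fin n, dd c v = dd c 0 := by
    intro v
    rw [← Fin.cast_val_eq_self v]
    exact hconstk v.val
  have hsum := sum_dd_zero c
  have hsumconst : ∑ v : Fin n, dd c v = n • (dd c 0) := by
    rw [Finset.sum_congr rfl (fun v _ => hconst v), Finset.sum_const, Finset.card_univ,
      Fintype.card_fin]
  have hn3 : n % 3 = 0 :=
    nsmul_fin3 (dd c 0) (dd_ne_zero hd 0) n (by rw [← hsumconst]; exact hsum)
  refine ⟨Finset.univ.filter (fun v => v.val % 3 = 1), ?_, ?_, ?_, ?_, hn3⟩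
  · intro v hv hv1
    rw [Finset.mem_filter] at hv hv1
    have h1 := hv.2
    have h2' := hv1.2
    rw [val_add_one' h2] at h2'
    have hvlt := v.isLt
    by_cases hc : v.val + 1 = n
    · rw [if_pos hc] at h2'; omega
    · rw [if_neg hc] at h2'; omega
  · intro v _; exact hnf v
  · intro v _
    have hvlt := v.isLt
    rcases (by omega : v.val % 3 = 1 ∨ v.val % 3 = 2 ∨ v.val % 3 = 0) with h | h | h
    · exact Or.inl (Finset.mem_filter.2 ⟨Finset.mem_univ _, h⟩)
    · refine Or.inr (Or.inl (Finset.mem_filter.2 ⟨Finset.mem_univ _, ?_⟩))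
      rw [val_sub_one' h2, if_neg (by omega : ¬ v.val = 0)]
      omega
    · refine Or.inr (Or.inr (Finset.mem_filter.2 ⟨Finset.mem_univ _, ?_⟩))
      rw [val_add_one' h2]
      rw [if_neg (by omega : ¬ v.val + 1 = n)]
      omega
  · have himg : Finset.univ.filter (fun v : Fin n => v.val % 3 = 1) =
        (Finset.range (n / 3)).image (fun i : ℕ => ((3 * i + 1 : ℕ) : Fin n)) := by
      ext v
      rw [Finset.mem_filter, Finset.mem_image]
      constructor
      · rintro ⟨_, hv⟩
        have hvlt := v.isLt
        refine ⟨v.val / 3, Finset.mem_range.2 (by omega), ?_⟩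
        rw [show 3 * (v.val / 3) + 1 = v.val by omega, Fin.cast_val_eq_self]
      · rintro ⟨i, hi, rfl⟩
        rw [Finset.mem_range] at hi
        refine ⟨Finset.mem_univ _, ?_⟩
        rw [Fin.val_natCast, Nat.mod_eq_of_lt (show 3 * i + 1 < n by omega)]
        omega
    rw [himg, Finset.card_image_of_injOn, Finset.card_range]
    intro i hi j hj hij
    rw [Finset.mem_coe, Finset.mem_range] at hi hj
    rw [Fin.ext_iff, Fin.val_natCast, Fin.val_natCast, Nat.mod_eq_of_lt (by omega),
      Nat.mod_eq_of_lt (by omega)] at hij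
    omega


def cfunA : ℕ → Fin 3 := fun m =>
  if m = 0 then 0 else if m = 1 then 1 else if m = 2 then 2 else if m = 3 then 0
  else if m = 4 then 1
  else if (m - 5) % 4 = 0 then 0 else if (m - 5) % 4 = 1 then 1
  else if (m - 5) % 4 = 2 then 2 else 1

def cfunB : ℕ → Fin 3 := fun m =>
  if m = 0 then 0 else if m = 1 then 1 else if m = 2 then 2 else if m = 3 then 0
  else if m = 4 then 1
  else if (m - 5) % 4 = 0 then 2 else if (m - 5) % 4 = 1 then 1
  else if (m - 5) % 4 = 2 then 0 else 1

def cA : Fin n → Fin 3 := fun v => cfunA v.val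
def cB : Fin n → Fin 3 := fun v => cfunB v.val

lemma cfunA_ge5 (m : ℕ) (h : 5 ≤ m) : cfunA m =
    (if (m - 5) % 4 = 0 then 0 else if (m - 5) % 4 = 1 then 1
     else if (m - 5) % 4 = 2 then 2 else 1) := by
  unfold cfunA
  rw [if_neg (by omega), if_neg (by omega), if_neg (by omega), if_neg (by omega),
    if_neg (by omega)]

lemma cfunB_ge5 (m : ℕ) (h : 5 ≤ m) : cfunB m =
    (if (m - 5) % 4 = 0 then 2 else if (m - 5) % 4 = 1 then 1
     else if (m - 5) % 4 = 2 then 0 else 1) := by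
  unfold cfunB
  rw [if_neg (by omega), if_neg (by omega), if_neg (by omega), if_neg (by omega),
    if_neg (by omega)]

lemma cfunA_step : ∀ m : ℕ, cfunA m ≠ cfunA (m + 1) := by
  intro m
  rcases lt_or_ge m 5 with h | h
  · interval_cases m <;> decide
  · have h2 : (m + 1 - 5) % 4 = ((m - 5) % 4 + 1) % 4 := by omega
    rw [cfunA_ge5 m h, cfunA_ge5 (m + 1) (by omega), h2]
    rcases (by omega : (m - 5) % 4 = 0 ∨ (m - 5) % 4 = 1 ∨ (m - 5) % 4 = 2 ∨ (m - 5) % 4 = 3)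
      with h0 | h0 | h0 | h0 <;> rw [h0] <;> decide

lemma cfunB_step : ∀ m : ℕ, cfunB m ≠ cfunB (m + 1) := by
  intro m
  rcases lt_or_ge m 5 with h | h
  · interval_cases m <;> decide
  · have h2 : (m + 1 - 5) % 4 = ((m - 5) % 4 + 1) % 4 := by omega
    rw [cfunB_ge5 m h, cfunB_ge5 (m + 1) (by omega), h2]
    rcases (by omega : (m - 5) % 4 = 0 ∨ (m - 5) % 4 = 1 ∨ (m - 5) % 4 = 2 ∨ (m - 5) % 4 = 3)
      with h0 | h0 | h0 | h0 <;> rw [h0] <;> decide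

lemma properA (h5 : 5 ≤ n) (hn4 : n % 4 = 1) : ∀ v : Fin n, cA v ≠ cA (v + 1) := by
  intro v
  have hvlt := v.isLt
  show cfunA v.val ≠ cfunA ((v + 1).val)
  rw [val_add_one' (by omega)]
  by_cases hc : v.val + 1 = n
  · rw [if_pos hc]
    have hv : v.val = n - 1 := by omega
    rw [hv]
    by_cases h9 : n = 5
    · rw [h9]; decide
    · rw [cfunA_ge5 (n - 1) (by omega), if_neg (by omega), if_neg (by omega),
        if_neg (by omega)]
      decide
  · rw [if_neg hc]; exact cfunA_step v.val

lemma properB (h5 : 5 ≤ n) (hodd : n % 2 = 1) (hn4 : n % 4 = 3) :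
    ∀ v : Fin n, cB v ≠ cB (v + 1) := by
  intro v
  have hvlt := v.isLt
  show cfunB v.val ≠ cfunB ((v + 1).val)
  rw [val_add_one' (by omega)]
  by_cases hc : v.val + 1 = n
  · rw [if_pos hc]
    have hv : v.val = n - 1 := by omega
    rw [hv]
    rw [cfunB_ge5 (n - 1) (by omega), if_neg (by omega), if_pos (by omega)]
    decide
  · rw [if_neg hc]; exact cfunB_step v.val

lemma flipA_iff (h5 : 5 ≤ n) (hodd : n % 2 = 1) (hn4 : n % 4 = 1) (v : Fin n) :
    Flip cA v ↔ (v.val = 0 ∨ v.val = 4 ∨ (v.val % 2 = 1 ∧ 5 ≤ v.val)) := by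
  have h2 : (2 : ℕ) ≤ n := by omega
  have hvlt := v.isLt
  show (cfunA ((v - 1).val) = cfunA ((v + 1).val)) ↔ _
  rw [val_sub_one' h2, val_add_one' h2]
  rcases (by omega : v.val = 0 ∨ (1 ≤ v.val ∧ v.val ≤ 3) ∨ v.val = 4 ∨ v.val = 5 ∨
      (6 ≤ v.val ∧ v.val + 1 ≤ n - 1) ∨ (v.val = n - 1 ∧ 6 ≤ v.val))
    with h0 | h0 | h0 | h0 | h0 | h0
  · rw [if_pos (by omega), if_neg (by omega), h0]
    refine iff_of_true ?_ (Or.inl rfl)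
    by_cases h9 : n = 5
    · rw [h9]; decide
    · rw [cfunA_ge5 (n - 1) (by omega), if_neg (by omega), if_neg (by omega),
        if_neg (by omega)]
      decide
  · rw [if_neg (by omega), if_neg (by omega)]
    refine iff_of_false ?_ (by omega)
    rcases (by omega : v.val = 1 ∨ v.val = 2 ∨ v.val = 3) with h1 | h1 | h1 <;>
      rw [h1] <;> decide
  · rw [if_neg (by omega), h0]
    refine iff_of_true ?_ (Or.inr (Or.inl rfl))
    by_cases hc : 4 + 1 = n
    · rw [if_pos hc]; decide
    · rw [if_neg hc]; decide
  · rw [if_neg (by omega), if_neg (by omega), h0]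
    refine iff_of_true ?_ (by omega)
    decide
  · rw [if_neg (by omega), if_neg (by omega)]
    rw [cfunA_ge5 (v.val - 1) (by omega), cfunA_ge5 (v.val + 1) (by omega)]
    rw [show (v.val - 1 - 5) % 4 = ((v.val - 5) % 4 + 3) % 4 by omega,
      show (v.val + 1 - 5) % 4 = ((v.val - 5) % 4 + 1) % 4 by omega]
    rcases (by omega : (v.val - 5) % 4 = 0 ∨ (v.val - 5) % 4 = 1 ∨ (v.val - 5) % 4 = 2 ∨
        (v.val - 5) % 4 = 3) with h1 | h1 | h1 | h1 <;> rw [h1]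
    · exact iff_of_true (by decide) (by omega)
    · exact iff_of_false (by decide) (by omega)
    · exact iff_of_true (by decide) (by omega)
    · exact iff_of_false (by decide) (by omega)
  · rw [if_neg (by omega), if_pos (by omega)]
    rw [cfunA_ge5 (v.val - 1) (by omega),
      show (v.val - 1 - 5) % 4 = 2 by omega]
    exact iff_of_false (by decide) (by omega)

lemma flipB_iff (h5 : 5 ≤ n) (hodd : n % 2 = 1) (hn4 : n % 4 = 3) (v : Fin n) :
    Flip cB v ↔ (v.val = 0 ∨ (v.val % 2 = 1 ∧ 5 ≤ v.val)) := by
  have h2 : (2 : ℕ) ≤ n := by omega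
  have h7 : 7 ≤ n := by omega
  have hvlt := v.isLt
  show (cfunB ((v - 1).val) = cfunB ((v + 1).val)) ↔ _
  rw [val_sub_one' h2, val_add_one' h2]
  rcases (by omega : v.val = 0 ∨ (1 ≤ v.val ∧ v.val ≤ 4) ∨ v.val = 5 ∨
      (6 ≤ v.val ∧ v.val + 1 ≤ n - 1) ∨ (v.val = n - 1 ∧ 6 ≤ v.val))
    with h0 | h0 | h0 | h0 | h0
  · rw [if_pos (by omega), if_neg (by omega), h0]
    refine iff_of_true ?_ (Or.inl rfl)
    rw [cfunB_ge5 (n - 1) (by omega), if_neg (by omega), if_pos (by omega)]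
    decide
  · rw [if_neg (by omega), if_neg (by omega)]
    refine iff_of_false ?_ (by omega)
    rcases (by omega : v.val = 1 ∨ v.val = 2 ∨ v.val = 3 ∨ v.val = 4)
      with h1 | h1 | h1 | h1 <;> rw [h1] <;> decide
  · rw [if_neg (by omega), if_neg (by omega), h0]
    refine iff_of_true ?_ (by omega)
    decide
  · rw [if_neg (by omega), if_neg (by omega)]
    rw [cfunB_ge5 (v.val - 1) (by omega), cfunB_ge5 (v.val + 1) (by omega)]
    rw [show (v.val - 1 - 5) % 4 = ((v.val - 5) % 4 + 3) % 4 by omega,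
      show (v.val + 1 - 5) % 4 = ((v.val - 5) % 4 + 1) % 4 by omega]
    rcases (by omega : (v.val - 5) % 4 = 0 ∨ (v.val - 5) % 4 = 1 ∨ (v.val - 5) % 4 = 2 ∨
        (v.val - 5) % 4 = 3) with h1 | h1 | h1 | h1 <;> rw [h1]
    · exact iff_of_true (by decide) (by omega)
    · exact iff_of_false (by decide) (by omega)
    · exact iff_of_true (by decide) (by omega)
    · exact iff_of_false (by decide) (by omega)
  · rw [if_neg (by omega), if_pos (by omega)]
    rw [cfunB_ge5 (v.val - 1) (by omega),
      show (v.val - 1 - 5) % 4 = 0 by omega]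
    exact iff_of_false (by decide) (by omega)

end Greedy
def Eset (n : ℕ) [NeZero n] : Finset (Fin n) :=
  (Finset.range ((n - 5) / 2)).image (fun i : ℕ => ((6 + 2 * i : ℕ) : Fin n))

lemma mem_Eset (hodd : n % 2 = 1) (h5 : 5 ≤ n) (v : Fin n) :
    v ∈ Eset n ↔ 6 ≤ v.val ∧ v.val % 2 = 0 := by
  have hvlt := v.isLt
  rw [Eset, Finset.mem_image]
  constructor
  · rintro ⟨i, hi, rfl⟩
    rw [Finset.mem_range] at hi
    rw [Fin.val_natCast, Nat.mod_eq_of_lt (show 6 + 2 * i < n by omega)]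
    omega
  · rintro ⟨h6, hev⟩
    refine ⟨(v.val - 6) / 2, Finset.mem_range.2 (by omega), ?_⟩
    rw [show 6 + 2 * ((v.val - 6) / 2) = v.val by omega, Fin.cast_val_eq_self]

lemma card_Eset (hodd : n % 2 = 1) (h5 : 5 ≤ n) : (Eset n).card = (n - 5) / 2 := by
  rw [Eset, Finset.card_image_of_injOn, Finset.card_range]
  intro i hi j hj hij
  rw [Finset.mem_coe, Finset.mem_range] at hi hj
  rw [Fin.ext_iff, Fin.val_natCast, Fin.val_natCast,
    Nat.mod_eq_of_lt (show 6 + 2 * i < n by omega),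
    Nat.mod_eq_of_lt (show 6 + 2 * j < n by omega)] at hij
  omega

lemma TA_lower (h5 : 5 ≤ n) (hodd : n % 2 = 1) (hn4 : n % 4 = 1) (T : Finset (Fin n))
    (hT2 : ∀ v ∈ T, ¬ Flip cA v)
    (hT3 : ∀ v : Fin n, ¬ Flip cA v → v ∈ T ∨ v - 1 ∈ T ∨ v + 1 ∈ T) :
    (n - 3) / 2 ≤ T.card := by
  have h2 : (2 : ℕ) ≤ n := by omega
  have hE : Eset n ⊆ T := by
    intro v hv
    rw [mem_Eset hodd h5] at hv
    obtain ⟨h6, hev⟩ := hv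
    have hvlt := v.isLt
    have hnf : ¬ Flip cA v := by
      rw [flipA_iff h5 hodd hn4]; omega
    rcases hT3 v hnf with h | h | h
    · exact h
    · exfalso
      apply hT2 _ h
      rw [flipA_iff h5 hodd hn4, val_sub_one' h2, if_neg (by omega)]
      omega
    · exfalso
      apply hT2 _ h
      rw [flipA_iff h5 hodd hn4, val_add_one' h2]
      by_cases hc : v.val + 1 = n
      · rw [if_pos hc]; omega
      · rw [if_neg hc]; omega
  set v2 : Fin n := ⟨2, by omega⟩ with hv2def
  have hval2 : v2.val = 2 := rfl
  have hnf2 : ¬ Flip cA v2 := by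
    rw [flipA_iff h5 hodd hn4, hval2]; omega
  have e1 : (v2 - 1).val = 1 := by
    rw [val_sub_one' h2, hval2]; norm_num
  have e2 : (v2 + 1).val = 3 := by
    rw [val_add_one' h2, hval2, if_neg (by omega)]
  have hxval : ∃ x ∈ T, 1 ≤ x.val ∧ x.val ≤ 3 := by
    rcases hT3 v2 hnf2 with h | h | h
    · exact ⟨v2, h, by omega⟩
    · exact ⟨v2 - 1, h, by omega⟩
    · exact ⟨v2 + 1, h, by omega⟩
  obtain ⟨x, hxT, hx1, hx3⟩ := hxval
  have hsub : insert x (Eset n) ⊆ T := Finset.insert_subset_iff.2 ⟨hxT, hE⟩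
  have hcard := Finset.card_le_card hsub
  rw [Finset.card_insert_of_notMem (fun hmem => by
      rw [mem_Eset hodd h5] at hmem; omega),
    card_Eset hodd h5] at hcard
  omega

lemma TA_exists (h5 : 5 ≤ n) (hodd : n % 2 = 1) (hn4 : n % 4 = 1) :
    ∃ T : Finset (Fin n), (∀ v ∈ T, v + 1 ∉ T) ∧ (∀ v ∈ T, ¬ Flip cA v) ∧
      (∀ v : Fin n, ¬ Flip cA v → v ∈ T ∨ v - 1 ∈ T ∨ v + 1 ∈ T) ∧
      T.card = (n - 3) / 2 := by
  have h2 : (2 : ℕ) ≤ n := by omega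
  set v2 : Fin n := ⟨2, by omega⟩ with hv2def
  have hval2 : v2.val = 2 := rfl
  have hmemT : ∀ v : Fin n, v ∈ insert v2 (Eset n) ↔
      (v.val = 2 ∨ (6 ≤ v.val ∧ v.val % 2 = 0)) := by
    intro v
    rw [Finset.mem_insert, mem_Eset hodd h5]
    constructor
    · rintro (rfl | h)
      · exact Or.inl rfl
      · exact Or.inr h
    · rintro (h | h)
      · exact Or.inl (Fin.ext (by rw [hval2, h]))
      · exact Or.inr h
  refine ⟨insert v2 (Eset n), ?_, ?_, ?_, ?_⟩
  · intro v hv hv1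
    rw [hmemT] at hv hv1
    have hvlt := v.isLt
    rw [val_add_one' h2] at hv1
    by_cases hc : v.val + 1 = n
    · rw [if_pos hc] at hv1; omega
    · rw [if_neg hc] at hv1; omega
  · intro v hv
    rw [hmemT] at hv
    rw [flipA_iff h5 hodd hn4]
    omega
  · intro v hnf
    rw [flipA_iff h5 hodd hn4] at hnf
    have hvlt := v.isLt
    rcases (by omega : v.val = 1 ∨ v.val = 2 ∨ v.val = 3 ∨ (6 ≤ v.val ∧ v.val % 2 = 0))
      with h | h | h | h
    · refine Or.inr (Or.inr ?_)
      rw [hmemT, val_add_one' h2, if_neg (by omega)]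
      omega
    · exact Or.inl ((hmemT v).2 (Or.inl h))
    · refine Or.inr (Or.inl ?_)
      rw [hmemT, val_sub_one' h2, if_neg (by omega)]
      omega
    · exact Or.inl ((hmemT v).2 (Or.inr h))
  · rw [Finset.card_insert_of_notMem (fun hmem => by
        rw [mem_Eset hodd h5] at hmem
        rw [hval2] at hmem
        omega),
      card_Eset hodd h5]
    omega

lemma TB_lower (h5 : 5 ≤ n) (hodd : n % 2 = 1) (hn4 : n % 4 = 3) (T : Finset (Fin n))
    (hT2 : ∀ v ∈ T, ¬ Flip cB v)
    (hT3 : ∀ v : Fin n, ¬ Flip cB v → v ∈ T ∨ v - 1 ∈ T ∨ v + 1 ∈ T) :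
    (n - 1) / 2 ≤ T.card := by
  have h2 : (2 : ℕ) ≤ n := by omega
  have h7 : 7 ≤ n := by omega
  have hE : Eset n ⊆ T := by
    intro v hv
    rw [mem_Eset hodd h5] at hv
    obtain ⟨h6, hev⟩ := hv
    have hvlt := v.isLt
    have hnf : ¬ Flip cB v := by
      rw [flipB_iff h5 hodd hn4]; omega
    rcases hT3 v hnf with h | h | h
    · exact h
    · exfalso
      apply hT2 _ h
      rw [flipB_iff h5 hodd hn4, val_sub_one' h2, if_neg (by omega)]
      omega
    · exfalso
      apply hT2 _ h
      rw [flipB_iff h5 hodd hn4, val_add_one' h2]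
      by_cases hc : v.val + 1 = n
      · rw [if_pos hc]; omega
      · rw [if_neg hc]; omega
  set w1 : Fin n := ⟨1, by omega⟩ with hw1def
  set w4 : Fin n := ⟨4, by omega⟩ with hw4def
  have hval1 : w1.val = 1 := rfl
  have hval4 : w4.val = 4 := rfl
  have hnf1 : ¬ Flip cB w1 := by rw [flipB_iff h5 hodd hn4, hval1]; omega
  have hnf4 : ¬ Flip cB w4 := by rw [flipB_iff h5 hodd hn4, hval4]; omega
  have e1m : (w1 - 1).val = 0 := by rw [val_sub_one' h2, hval1]; norm_num
  have e1p : (w1 + 1).val = 2 := by rw [val_add_one' h2, hval1, if_neg (by omega)]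
  have e4m : (w4 - 1).val = 3 := by rw [val_sub_one' h2, hval4]; norm_num
  have e4p : (w4 + 1).val = 5 := by rw [val_add_one' h2, hval4, if_neg (by omega)]
  have hx1 : ∃ x ∈ T, 1 ≤ x.val ∧ x.val ≤ 2 := by
    rcases hT3 w1 hnf1 with h | h | h
    · exact ⟨w1, h, by omega⟩
    · exfalso
      apply hT2 _ h
      rw [flipB_iff h5 hodd hn4, e1m]
      omega
    · exact ⟨w1 + 1, h, by omega⟩
  have hx4 : ∃ x ∈ T, 3 ≤ x.val ∧ x.val ≤ 4 := by
    rcases hT3 w4 hnf4 with h | h | h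
    · exact ⟨w4, h, by omega⟩
    · exact ⟨w4 - 1, h, by omega⟩
    · exfalso
      apply hT2 _ h
      rw [flipB_iff h5 hodd hn4, e4p]
      omega
  obtain ⟨x, hxT, hxa, hxb⟩ := hx1
  obtain ⟨y, hyT, hya, hyb⟩ := hx4
  have hxy : x ≠ y := fun h => by rw [Fin.ext_iff] at h; omega
  have hsub : insert x (insert y (Eset n)) ⊆ T :=
    Finset.insert_subset_iff.2 ⟨hxT, Finset.insert_subset_iff.2 ⟨hyT, hE⟩⟩
  have hcard := Finset.card_le_card hsub
  rw [Finset.card_insert_of_notMem (fun hmem => by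
      rcases Finset.mem_insert.1 hmem with h | h
      · exact hxy h
      · rw [mem_Eset hodd h5] at h; omega),
    Finset.card_insert_of_notMem (fun hmem => by
      rw [mem_Eset hodd h5] at hmem; omega),
    card_Eset hodd h5] at hcard
  omega

lemma TB_exists (h5 : 5 ≤ n) (hodd : n % 2 = 1) (hn4 : n % 4 = 3) :
    ∃ T : Finset (Fin n), (∀ v ∈ T, v + 1 ∉ T) ∧ (∀ v ∈ T, ¬ Flip cB v) ∧
      (∀ v : Fin n, ¬ Flip cB v → v ∈ T ∨ v - 1 ∈ T ∨ v + 1 ∈ T) ∧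
      T.card = (n - 1) / 2 := by
  have h2 : (2 : ℕ) ≤ n := by omega
  set w1 : Fin n := ⟨1, by omega⟩ with hw1def
  set w3 : Fin n := ⟨3, by omega⟩ with hw3def
  have hval1 : w1.val = 1 := rfl
  have hval3 : w3.val = 3 := rfl
  have hne13 : w1 ≠ w3 := fun h => by rw [Fin.ext_iff] at h; exact absurd h (by omega)
  have hmemT : ∀ v : Fin n, v ∈ insert w1 (insert w3 (Eset n)) ↔
      (v.val = 1 ∨ v.val = 3 ∨ (6 ≤ v.val ∧ v.val % 2 = 0)) := by
    intro v
    rw [Finset.mem_insert, Finset.mem_insert, mem_Eset hodd h5]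
    constructor
    · rintro (rfl | rfl | h)
      · exact Or.inl rfl
      · exact Or.inr (Or.inl rfl)
      · exact Or.inr (Or.inr h)
    · rintro (h | h | h)
      · exact Or.inl (Fin.ext (by rw [hval1, h]))
      · exact Or.inr (Or.inl (Fin.ext (by rw [hval3, h])))
      · exact Or.inr (Or.inr h)
  refine ⟨insert w1 (insert w3 (Eset n)), ?_, ?_, ?_, ?_⟩
  · intro v hv hv1
    rw [hmemT] at hv hv1
    have hvlt := v.isLt
    rw [val_add_one' h2] at hv1
    by_cases hc : v.val + 1 = n
    · rw [if_pos hc] at hv1; omega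
    · rw [if_neg hc] at hv1; omega
  · intro v hv
    rw [hmemT] at hv
    rw [flipB_iff h5 hodd hn4]
    omega
  · intro v hnf
    rw [flipB_iff h5 hodd hn4] at hnf
    have hvlt := v.isLt
    rcases (by omega : v.val = 1 ∨ v.val = 2 ∨ v.val = 3 ∨ v.val = 4 ∨
        (6 ≤ v.val ∧ v.val % 2 = 0)) with h | h | h | h | h
    · exact Or.inl ((hmemT v).2 (Or.inl h))
    · refine Or.inr (Or.inr ?_)
      rw [hmemT, val_add_one' h2, if_neg (by omega)]
      omega
    · exact Or.inl ((hmemT v).2 (Or.inr (Or.inl h)))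
    · refine Or.inr (Or.inl ?_)
      rw [hmemT, val_sub_one' h2, if_neg (by omega)]
      omega
    · exact Or.inl ((hmemT v).2 (Or.inr (Or.inr h)))
  · rw [Finset.card_insert_of_notMem (fun hmem => by
        rcases Finset.mem_insert.1 hmem with h | h
        · exact hne13 h
        · rw [mem_Eset hodd h5] at h
          rw [hval1] at h
          omega),
      Finset.card_insert_of_notMem (fun hmem => by
        rw [mem_Eset hodd h5] at hmem
        rw [hval3] at hmem
        omega),
      card_Eset hodd h5]
    omega

lemma crit_of_valid (h5 : 5 ≤ n) {c : Fin n → Fin 3} (hc : properColoring (cycGraph n) 3 c)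
    (T : Finset (Fin n)) (h1 : ∀ v ∈ T, v + 1 ∉ T) (h2 : ∀ v ∈ T, ¬ Flip c v)
    (h3 : ∀ v : Fin n, ¬ Flip c v → v ∈ T ∨ v - 1 ∈ T ∨ v + 1 ∈ T) :
    CriticalSet (cycGraph n) c Tᶜ ∧ (Tᶜ).card = n - T.card := by
  constructor
  · rw [crit_iff h5 hc, compl_compl]
    exact ⟨h1, fun v hv => h2 v hv, fun v hv => h3 v hv⟩
  · rw [Finset.card_compl, Fintype.card_fin]

lemma card_compl_eq (S : Finset (Fin n)) : S.card = n - (Sᶜ).card ∧ (Sᶜ).card ≤ n := by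
  have h1 := Finset.card_compl S
  have h2 := Finset.card_le_univ S
  have h3 := Finset.card_le_univ (Sᶜ)
  rw [Fintype.card_fin] at h1 h2 h3
  omega

end Stmt10


theorem stmt10 (n : ℕ) [NeZero n] (hn : Odd n) (h5 : 5 ≤ n) :
    IsLeast {m : ℕ | ∃ c : Fin n → Fin 3, properColoring (cycGraph n) 3 c ∧
      IsGreatest {s : ℕ | ∃ S : Finset (Fin n), CriticalSet (cycGraph n) c S ∧ S.card = s} m}
      (if n % 4 = 1 then (n + 3) / 2 else (n + 1) / 2) := by
  have hodd : n % 2 = 1 := Nat.odd_iff.1 hn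
  have h2n : 2 ≤ n := by omega
  constructor
  · -- membership
    rcases (by omega : n % 4 = 1 ∨ n % 4 = 3) with h4 | h4
    · rw [if_pos h4]
      have hcA : properColoring (cycGraph n) 3 Stmt10.cA :=
        (Stmt10.proper_iff h2n _).2 (Stmt10.properA h5 h4)
      refine ⟨Stmt10.cA, hcA, ?_, ?_⟩
      · obtain ⟨T, t1, t2, t3, tcard⟩ := Stmt10.TA_exists h5 hodd h4
        obtain ⟨hcrit, hcard⟩ := Stmt10.crit_of_valid h5 hcA T t1 t2 t3
        refine ⟨Tᶜ, hcrit, ?_⟩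
        rw [hcard, tcard]
        omega
      · intro s hs
        obtain ⟨S, hS, rfl⟩ := hs
        obtain ⟨g1, g2, g3⟩ := (Stmt10.crit_iff h5 hcA S).1 hS
        have hlow := Stmt10.TA_lower h5 hodd h4 (Sᶜ) g2 g3
        have hcc := Stmt10.card_compl_eq S
        omega
    · rw [if_neg (by omega)]
      have hcB : properColoring (cycGraph n) 3 Stmt10.cB :=
        (Stmt10.proper_iff h2n _).2 (Stmt10.properB h5 hodd h4)
      refine ⟨Stmt10.cB, hcB, ?_, ?_⟩
      · obtain ⟨T, t1, t2, t3, tcard⟩ := Stmt10.TB_exists h5 hodd h4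
        obtain ⟨hcrit, hcard⟩ := Stmt10.crit_of_valid h5 hcB T t1 t2 t3
        refine ⟨Tᶜ, hcrit, ?_⟩
        rw [hcard, tcard]
        omega
      · intro s hs
        obtain ⟨S, hS, rfl⟩ := hs
        obtain ⟨g1, g2, g3⟩ := (Stmt10.crit_iff h5 hcB S).1 hS
        have hlow := Stmt10.TB_lower h5 hodd h4 (Sᶜ) g2 g3
        have hcc := Stmt10.card_compl_eq S
        omega
  · -- lower bound
    rintro m ⟨c, hc, hgr⟩
    have hd := (Stmt10.proper_iff h2n c).1 hc
    by_cases hF : ∃ w, Stmt10.Flip c w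
    · set T := Stmt10.gT hF with hTdef
      have t1 := Stmt10.gT_indep hF
      have t2 : ∀ v ∈ T, ¬ Stmt10.Flip c v := fun v hv => ((Stmt10.mem_gT hF v).1 hv).1
      have t3 := Stmt10.gT_dom hF
      obtain ⟨hcrit, hcard⟩ := Stmt10.crit_of_valid h5 hc T t1 t2 t3
      have hub := hgr.2 ⟨Tᶜ, hcrit, rfl⟩
      have hbound := Stmt10.gT_card_bound h5 hodd hd hF
      rw [← hTdef] at hbound
      have hTle : T.card ≤ n := by
        have := Finset.card_le_univ T
        rwa [Fintype.card_fin] at this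
      rcases (by omega : n % 4 = 1 ∨ n % 4 = 3) with h4 | h4
      · rw [if_pos h4]
        have := hbound.2 h4
        omega
      · rw [if_neg (by omega)]
        have := hbound.1
        omega
    · push_neg at hF
      obtain ⟨T, t1, t2, t3, tcard, hn3⟩ := Stmt10.noflip_case h5 hd hF
      obtain ⟨hcrit, hcard⟩ := Stmt10.crit_of_valid h5 hc T t1 t2 t3
      have hub := hgr.2 ⟨Tᶜ, hcrit, rfl⟩
      rcases (by omega : n % 4 = 1 ∨ n % 4 = 3) with h4 | h4
      · rw [if_pos h4]; omega
      · rw [if_neg (by omega)]; omega
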